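/- Let (X, ▷) be a rack and τ : X → X a map with τ² = id, τ ≠ id, and τ(τ(x) ▷ y) = x ▷ τ(y) for all x, y ∈ X. Define r̃(x,y) = (x ▷ y, x) and r = (τ×id) ∘ r̃ ∘ (τ×id). Then r is a set-theoretic solution of the Yang–Baxter equation, r(x,y) = (x ▷ τ(y), τ(x)) = ((id×τ) ∘ r̃ ∘ (id×τ))(x,y), and r is of the form r(x,y) = (σ_x(y), τ(x)) with σ_x bijective for every x (so (X, r) is a near-rack solution). -/
import Mathlib


def rFst {X : Type*} (r : X × X → X × X) : X × X × X → X × X × X :=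
  fun p => ((r (p.1, p.2.1)).1, (r (p.1, p.2.1)).2, p.2.2)

def rSnd {X : Type*} (r : X × X → X × X) : X × X × X → X × X × X :=
  fun p => (p.1, r (p.2.1, p.2.2))

def IsYB {X : Type*} (r : X × X → X × X) : Prop :=
  rFst r ∘ rSnd r ∘ rFst r = rSnd r ∘ rFst r ∘ rSnd r

/-- A rack structure: each left translation is bijective and the operation
is left self-distributive. -/
def IsRack {X : Type*} (op : X → X → X) : Prop :=
  (∀ x : X, Function.Bijective (op x)) ∧
    ∀ x y z : X, op x (op y z) = op (op x y) (op x z)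

theorem stmt6 {X : Type*} (op : X → X → X) (τ : X → X)
    (hrack : IsRack op) (hτ2 : τ ∘ τ = id) (hτne : τ ≠ id)
    (hcompat : ∀ x y : X, τ (op (τ x) y) = op x (τ y)) :
    IsYB (Prod.map τ id ∘ (fun p : X × X => (op p.1 p.2, p.1)) ∘ Prod.map τ id) ∧
    (∀ x y : X,
      (Prod.map τ id ∘ (fun p : X × X => (op p.1 p.2, p.1)) ∘ Prod.map τ id) (x, y)
        = (op x (τ y), τ x) ∧
      (Prod.map τ id ∘ (fun p : X × X => (op p.1 p.2, p.1)) ∘ Prod.map τ id) (x, y)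
        = (Prod.map id τ ∘ (fun p : X × X => (op p.1 p.2, p.1)) ∘ Prod.map id τ) (x, y)) ∧
    (∀ x : X, Function.Bijective (fun y => op x (τ y))) := by
  obtain ⟨hbij, hdist⟩ := hrack
  have hττ : ∀ a : X, τ (τ a) = a := fun a => congrFun hτ2 a
  have h1 : ∀ a b : X, τ (op a (τ b)) = op (τ a) b := by
    intro a b
    calc τ (op a (τ b)) = τ (op (τ (τ a)) (τ b)) := by rw [hττ]
    _ = op (τ a) (τ (τ b)) := hcompat _ _
    _ = op (τ a) b := by rw [hττ]
  have hτbij : Function.Bijective τ :=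
    Function.bijective_iff_has_inverse.2 ⟨τ, hττ, hττ⟩
  refine ⟨?_, fun x y => ⟨by simp [hcompat], by simp [hcompat, h1]⟩, fun x =>
    (hbij x).comp hτbij⟩
  funext p
  obtain ⟨x, y, z⟩ := p
  simp only [IsYB, rFst, rSnd, Function.comp_apply, Prod.map_apply, id_eq,
    hcompat, h1, hττ, Prod.mk.injEq]
  exact ⟨by rw [← hdist], trivial⟩
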